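/- Let A ⊆ C ⊆ B be integral extensions of commutative rings. Then the extension A ⊆ C is R-subintegral if and only if C is contained in the R-seminormalization A^{R+}_B of A in B. (Universal property of the R-seminormalization: A^{R+}_B is the biggest R-subintegral subextension of A ⊆ B.) -/

import Mathlib

/-- An ideal `I` of a commutative ring is *real* if whenever a finite sum of squares
of elements lies in `I`, then each of these elements lies in `I`. -/
def Ideal.IsRealIdeal {A : Type*} [CommRing A] (I : Ideal A) : Prop :=
  ∀ (n : ℕ) (a : Fin n → A), (∑ i, a i ^ 2) ∈ I → ∀ i, a i ∈ I

/-- An integral extension `φ : A → B` is *R-subintegral* if for every real prime ideal `p`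
of `A` there is exactly one prime ideal `q` of `B` lying over `p`, this `q` is a real ideal,
and the induced map of residue fields `κ(p) → κ(q)` is an isomorphism.  (The residue-field
isomorphism is expressed by its surjectivity: every `b : B` is congruent mod `q` to a
fraction `a/s` with `a s : A`, `s ∉ p`; injectivity is automatic for fields.) -/
def RSubintegral {A B : Type*} [CommRing A] [CommRing B] (φ : A →+* B) : Prop :=
  ∀ p : Ideal A, p.IsPrime → p.IsRealIdeal →
    (∃! q : Ideal B, q.IsPrime ∧ q.comap φ = p) ∧
    ∀ q : Ideal B, q.IsPrime → q.comap φ = p →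
      q.IsRealIdeal ∧ ∀ b : B, ∃ a s : A, s ∉ p ∧ φ s * b - φ a ∈ q

/-- The sum `S + I` of a subring and an ideal, as a subring. -/
def Subring.addIdeal {R : Type*} [CommRing R] (S : Subring R) (I : Ideal R) : Subring R where
  carrier := {x | ∃ s ∈ S, ∃ r ∈ I, x = s + r}
  zero_mem' := ⟨0, S.zero_mem, 0, I.zero_mem, by ring⟩
  one_mem' := ⟨1, S.one_mem, 0, I.zero_mem, by ring⟩
  add_mem' := by
    rintro x y ⟨s, hs, r, hr, rfl⟩ ⟨s', hs', r', hr', rfl⟩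
    exact ⟨s + s', S.add_mem hs hs', r + r', I.add_mem hr hr', by ring⟩
  neg_mem' := by
    rintro x ⟨s, hs, r, hr, rfl⟩
    exact ⟨-s, S.neg_mem hs, -r, I.neg_mem hr, by ring⟩
  mul_mem' := by
    rintro x y ⟨s, hs, r, hr, rfl⟩ ⟨s', hs', r', hr', rfl⟩
    exact ⟨s * s', S.mul_mem hs hs',
      s * r' + r * s' + r * r',
      I.add_mem (I.add_mem (I.mul_mem_left _ hr') (I.mul_mem_right _ hr)) (I.mul_mem_left _ hr'),
      by ring⟩

variable {A B : Type*} [CommRing A] [CommRing B]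

/-- The canonical map `A_p → B_p`, where `B_p` denotes the localization of `B` at the
multiplicative set `φ(A ∖ p)`. -/
noncomputable def locMap (φ : A →+* B) (p : Ideal A) [p.IsPrime] :
    Localization.AtPrime p →+* Localization (p.primeCompl.map φ) :=
  IsLocalization.map _ φ (Submonoid.le_comap_map p.primeCompl)

/-- The subring `A_p + Rad(B_p)` of `B_p`, where `A_p` is the image of the localization of
`A` at `p` and `Rad` is the Jacobson radical. -/
noncomputable def localCondSubring (φ : A →+* B) (p : Ideal A) [p.IsPrime] :
    Subring (Localization (p.primeCompl.map φ)) :=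
  (locMap φ p).range.addIdeal ((⊥ : Ideal (Localization (p.primeCompl.map φ))).jacobson)

/-- The R-seminormalization `A^{R+}_B` of `A` in `B`: the elements `b : B` such that for every
real prime ideal `p` of `A`, the image of `b` in `B_p` lies in `A_p + Rad(B_p)`. -/
noncomputable def RSemi (φ : A →+* B) : Subring B :=
  ⨅ p : {p : Ideal A // p.IsPrime ∧ p.IsRealIdeal},
    letI : p.1.IsPrime := p.2.1
    Subring.comap (algebraMap B (Localization (p.1.primeCompl.map φ))) (localCondSubring φ p.1)

lemma mem_RSemi_of_range (φ : A →+* B) (a : A) : φ a ∈ RSemi φ := by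
  rw [RSemi, Subring.mem_iInf]
  intro p
  letI : p.1.IsPrime := p.2.1
  rw [Subring.mem_comap]
  refine ⟨locMap φ p.1 (algebraMap A (Localization.AtPrime p.1) a), ⟨_, rfl⟩,
    0, Ideal.zero_mem _, ?_⟩
  rw [add_zero, locMap, IsLocalization.map_eq]

section Aux

variable {A B : Type*} [CommRing A] [CommRing B] (φ : A →+* B) (p : Ideal A) [p.IsPrime]

lemma locMap_comp :
    (locMap φ p).comp (algebraMap A (Localization.AtPrime p)) =
      (algebraMap B (Localization (p.primeCompl.map φ))).comp φ :=
  RingHom.ext fun a => by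
    simp only [RingHom.comp_apply, locMap, IsLocalization.map_eq]

lemma locMap_isIntegral (h : φ.IsIntegral) : (locMap φ p).IsIntegral :=
  isIntegral_localization' h p.primeCompl

/-- Lying over for ring homs. -/
lemma exists_prime_over {R S : Type*} [CommRing R] [CommRing S] (f : R →+* S)
    (hinj : Function.Injective f) (hint : f.IsIntegral) (q : Ideal R) [q.IsPrime] :
    ∃ Q : Ideal S, Q.IsPrime ∧ Q.comap f = q := by
  letI : Algebra R S := f.toAlgebra
  haveI : Algebra.IsIntegral R S := ⟨hint⟩
  have hb : Ideal.comap (algebraMap R S) (⊥ : Ideal S) ≤ q := by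
    rw [Ideal.comap_bot_of_injective (algebraMap R S) hinj]
    exact bot_le
  obtain ⟨Q, -, hQ, hQc⟩ := Ideal.exists_ideal_over_prime_of_isIntegral q ⊥ hb
  exact ⟨Q, hQ, hQc⟩

/-- A prime of `B` lying over `p` extends to a maximal ideal of the localization `B_p`. -/
lemma exists_max_over (h : φ.IsIntegral) (Q : Ideal B) (hQ : Q.IsPrime) (hQp : Q.comap φ = p) :
    ∃ m : Ideal (Localization (p.primeCompl.map φ)), m.IsMaximal ∧
      m.comap (algebraMap B (Localization (p.primeCompl.map φ))) = Q := by
  have hdisj : Disjoint ((p.primeCompl.map φ : Submonoid B) : Set B) (Q : Set B) := by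
    rw [Set.disjoint_left]
    rintro _ ⟨s, hs, rfl⟩ hsQ
    exact hs (hQp ▸ hsQ)
  set m := Q.map (algebraMap B (Localization (p.primeCompl.map φ))) with hm
  have hm_prime : m.IsPrime :=
    IsLocalization.isPrime_of_isPrime_disjoint (p.primeCompl.map φ) _ Q hQ hdisj
  have hcomap : m.comap (algebraMap B (Localization (p.primeCompl.map φ))) = Q :=
    IsLocalization.comap_map_of_isPrime_disjoint (p.primeCompl.map φ) _ hQ hdisj
  have hAcomap : (m.comap (locMap φ p)).comap (algebraMap A (Localization.AtPrime p)) = p := by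
    rw [Ideal.comap_comap, locMap_comp, ← Ideal.comap_comap, hcomap, hQp]
  haveI := hm_prime
  have hproper : m.comap (locMap φ p) ≠ ⊤ :=
    (Ideal.comap_isPrime (locMap φ p) m).ne_top
  have h1 : m.comap (locMap φ p) = IsLocalRing.maximalIdeal (Localization.AtPrime p) := by
    refine le_antisymm (IsLocalRing.le_maximalIdeal hproper) ?_
    rw [← Localization.AtPrime.map_eq_maximalIdeal]
    exact Ideal.map_le_iff_le_comap.mpr (le_of_eq hAcomap.symm)
  have hmax : m.IsMaximal :=
    Ideal.isMaximal_of_isIntegral_of_isMaximal_comap' (locMap φ p) (locMap_isIntegral φ p h) m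
      (h1 ▸ IsLocalRing.maximalIdeal.isMaximal _)
  exact ⟨m, hmax, hcomap⟩

/-- Any maximal ideal of the localization `B_p` contracts to a prime of `B` over `p`. -/
lemma comap_comap_of_isMaximal (h : φ.IsIntegral)
    (m : Ideal (Localization (p.primeCompl.map φ))) (hm : m.IsMaximal) :
    (m.comap (algebraMap B (Localization (p.primeCompl.map φ)))).comap φ = p := by
  rw [Ideal.comap_comap, ← locMap_comp, ← Ideal.comap_comap]
  haveI : (m.comap (locMap φ p)).IsMaximal :=
    Ideal.isMaximal_comap_of_isIntegral_of_isMaximal' _ (locMap_isIntegral φ p h) m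
  rw [IsLocalRing.eq_maximalIdeal this]
  exact Localization.AtPrime.comap_maximalIdeal


lemma locMap_algebraMap (a : A) :
    locMap φ p (algebraMap A (Localization.AtPrime p) a) =
      algebraMap B (Localization (p.primeCompl.map φ)) (φ a) := by
  rw [locMap, IsLocalization.map_eq]

lemma mem_addIdeal_iff {R : Type*} [CommRing R] {S : Subring R} {I : Ideal R} {x : R} :
    x ∈ S.addIdeal I ↔ ∃ s ∈ S, ∃ r ∈ I, x = s + r := Iff.rfl

/-- The crucial algebraic identity: `χ(s) * loc(a/s) = χ(a)` in `B_p`. -/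
lemma locMap_mk' (a : A) (s : p.primeCompl) :
    algebraMap B (Localization (p.primeCompl.map φ)) (φ s) *
      locMap φ p (IsLocalization.mk' (Localization.AtPrime p) a s) =
        algebraMap B (Localization (p.primeCompl.map φ)) (φ a) := by
  have h := congrArg (locMap φ p) (IsLocalization.mk'_spec' (Localization.AtPrime p) a s)
  rwa [map_mul, locMap_algebraMap, locMap_algebraMap] at h

end Aux
/-- Universal property of the R-seminormalization: for integral extensions `A ⊆ C ⊆ B`,
the extension `A ⊆ C` is R-subintegral iff (the image of) `C` is contained in the
R-seminormalization `A^{R+}_B` of `A` in `B`. -/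
theorem rSubintegral_iff_le_rSemi {A C B : Type*} [CommRing A] [CommRing C] [CommRing B]
    (φ : A →+* C) (ψ : C →+* B)
    (hφinj : Function.Injective φ) (hψinj : Function.Injective ψ)
    (hφint : φ.IsIntegral) (hψint : ψ.IsIntegral) :
    RSubintegral φ ↔ ∀ c : C, ψ c ∈ RSemi (ψ.comp φ) := by
  have hχint : (ψ.comp φ).IsIntegral := RingHom.IsIntegral.trans φ ψ hφint hψint
  constructor
  · -- R-subintegral implies contained in the R-seminormalization
    intro hR c
    rw [RSemi, Subring.mem_iInf]
    rintro ⟨p, hp, hpreal⟩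
    letI : p.IsPrime := hp
    rw [Subring.mem_comap]
    obtain ⟨⟨q, ⟨hq_prime, hq_comap⟩, hq_uniq⟩, hqall⟩ := hR p hp hpreal
    obtain ⟨a, s, hs, hd⟩ := (hqall q hq_prime hq_comap).2 c
    set Bp := Localization (p.primeCompl.map (ψ.comp φ)) with hBp
    set α : Localization.AtPrime p :=
      IsLocalization.mk' (Localization.AtPrime p) a (⟨s, hs⟩ : p.primeCompl) with hα
    refine ⟨locMap (ψ.comp φ) p α, ⟨α, rfl⟩,
      algebraMap B Bp (ψ c) - locMap (ψ.comp φ) p α, ?_, by ring⟩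
    have hsunit : IsUnit (algebraMap B Bp ((ψ.comp φ) s)) :=
      IsLocalization.map_units Bp (⟨(ψ.comp φ) s, ⟨s, hs, rfl⟩⟩ : p.primeCompl.map (ψ.comp φ))
    rw [← Ideal.unit_mul_mem_iff_mem _ hsunit]
    have h1 := locMap_mk' (ψ.comp φ) p a (⟨s, hs⟩ : p.primeCompl)
    have key : algebraMap B Bp ((ψ.comp φ) s) * (algebraMap B Bp (ψ c) - locMap (ψ.comp φ) p α)
        = algebraMap B Bp (ψ (φ s * c - φ a)) := by
      simp only [map_sub, map_mul, RingHom.comp_apply] at h1 ⊢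
      rw [mul_sub, h1]
    rw [key, Ideal.jacobson, Ideal.mem_sInf]
    rintro m ⟨-, hm⟩
    haveI : m.IsPrime := hm.isPrime
    have hq'p : ((m.comap (algebraMap B Bp)).comap ψ).comap φ = p := by
      rw [Ideal.comap_comap]
      exact comap_comap_of_isMaximal (ψ.comp φ) p hχint m hm
    haveI : (m.comap (algebraMap B Bp)).IsPrime := Ideal.comap_isPrime _ m
    have hq'prime : ((m.comap (algebraMap B Bp)).comap ψ).IsPrime := Ideal.comap_isPrime _ _
    have heq : (m.comap (algebraMap B Bp)).comap ψ = q := hq_uniq _ ⟨hq'prime, hq'p⟩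
    have : φ s * c - φ a ∈ (m.comap (algebraMap B Bp)).comap ψ := heq ▸ hd
    exact this
  · -- contained in the R-seminormalization implies R-subintegral
    intro h p hp hpreal
    letI : p.IsPrime := hp
    -- Key claim: denominators can be chosen uniformly for all primes over p
    have KC : ∀ c : C, ∃ a s : A, s ∉ p ∧ ∀ q : Ideal C, q.IsPrime → q.comap φ = p →
        φ s * c - φ a ∈ q := by
      intro c
      have hc0 := h c
      rw [RSemi, Subring.mem_iInf] at hc0
      have hc : algebraMap B (Localization (p.primeCompl.map (ψ.comp φ))) (ψ c) ∈
          localCondSubring (ψ.comp φ) p := hc0 ⟨p, hp, hpreal⟩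
      obtain ⟨x, ⟨α, rfl⟩, r, hr, hx⟩ := hc
      obtain ⟨⟨a, s⟩, rfl⟩ := IsLocalization.mk'_surjective p.primeCompl α
      refine ⟨a, s, s.2, ?_⟩
      have h1 := locMap_mk' (ψ.comp φ) p a s
      have key : algebraMap B (Localization (p.primeCompl.map (ψ.comp φ))) (ψ (φ s * c - φ a))
          = algebraMap B (Localization (p.primeCompl.map (ψ.comp φ))) ((ψ.comp φ) s) * r := by
        simp only [map_sub, map_mul, RingHom.comp_apply] at h1 hx ⊢
        rw [hx, ← h1]
        ring
      have hd : algebraMap B (Localization (p.primeCompl.map (ψ.comp φ))) (ψ (φ s * c - φ a)) ∈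
          (⊥ : Ideal (Localization (p.primeCompl.map (ψ.comp φ)))).jacobson := by
        rw [key]
        exact Ideal.mul_mem_left _ _ hr
      intro q hq hqp
      haveI := hq
      obtain ⟨Q, hQ, hQc⟩ := exists_prime_over ψ hψinj hψint q
      have hQp : Q.comap (ψ.comp φ) = p := by rw [← Ideal.comap_comap, hQc, hqp]
      obtain ⟨m, hm, hmc⟩ := exists_max_over (ψ.comp φ) p hχint Q hQ hQp
      rw [Ideal.jacobson, Ideal.mem_sInf] at hd
      have h2 := hd ⟨bot_le, hm⟩
      have h3 : ψ (φ s * c - φ a) ∈ Q := by rw [← hmc]; exact h2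
      have h4 : φ s * c - φ a ∈ Q.comap ψ := h3
      rwa [hQc] at h4
    -- Uniqueness of primes over p
    have huniq : ∀ q₁ q₂ : Ideal C, q₁.IsPrime → q₂.IsPrime →
        q₁.comap φ = p → q₂.comap φ = p → q₁ ≤ q₂ := by
      intro q₁ q₂ h₁ h₂ hc₁ hc₂ c hcq₁
      obtain ⟨a, s, hs, hdq⟩ := KC c
      have hd₁ := hdq q₁ h₁ hc₁
      have hd₂ := hdq q₂ h₂ hc₂
      have hφa : φ a ∈ q₁ := by
        have e : φ a = φ s * c - (φ s * c - φ a) := by ring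
        rw [e]
        exact Ideal.sub_mem _ (Ideal.mul_mem_left _ _ hcq₁) hd₁
      have ha : a ∈ p := by rw [← hc₁]; exact hφa
      have hφa₂ : φ a ∈ q₂ := by rw [← hc₂] at ha; exact ha
      have hsc : φ s * c ∈ q₂ := by
        have e : φ s * c = (φ s * c - φ a) + φ a := by ring
        rw [e]
        exact Ideal.add_mem _ hd₂ hφa₂
      rcases h₂.mem_or_mem hsc with hmem | hmem
      · exact absurd (show s ∈ p by rw [← hc₂]; exact hmem) hs
      · exact hmem
    obtain ⟨q₀, hq₀, hq₀c⟩ := exists_prime_over φ hφinj hφint p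
    refine ⟨⟨q₀, ⟨hq₀, hq₀c⟩, fun y hy =>
      le_antisymm (huniq y q₀ hy.1 hq₀ hy.2 hq₀c) (huniq q₀ y hq₀ hy.1 hq₀c hy.2)⟩, ?_⟩
    intro q hq hqc
    constructor
    · -- q is a real ideal
      intro n cv hsum i
      choose a s hs hdq using fun j => KC (cv j)
      have hSc : (∏ j, s j) ∈ p.primeCompl := Submonoid.prod_mem _ fun j _ => hs j
      set t : Fin n → A := fun j => a j * ∏ k ∈ Finset.univ.erase j, s k with ht
      have he : ∀ j, φ (∏ k, s k) * cv j - φ (t j) ∈ q := by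
        intro j
        have h0 := hdq j q hq hqc
        have e : φ (∏ k, s k) * cv j - φ (t j)
            = φ (∏ k ∈ Finset.univ.erase j, s k) * (φ (s j) * cv j - φ (a j)) := by
          rw [← Finset.mul_prod_erase Finset.univ s (Finset.mem_univ j), ht]
          simp only [map_mul]
          ring
        rw [e]
        exact Ideal.mul_mem_left _ _ h0
      have hY : φ (∑ j, t j ^ 2) ∈ q := by
        have hX : φ (∏ k, s k) ^ 2 * (∑ j, cv j ^ 2) ∈ q := Ideal.mul_mem_left _ _ hsum
        have expand : φ (∑ j, t j ^ 2)
            = (∑ j, (φ (t j) - φ (∏ k, s k) * cv j) * (φ (t j) + φ (∏ k, s k) * cv j))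
              + φ (∏ k, s k) ^ 2 * (∑ j, cv j ^ 2) := by
          rw [map_sum, Finset.mul_sum, ← Finset.sum_add_distrib]
          exact Finset.sum_congr rfl fun j _ => by rw [map_pow]; ring
        rw [expand]
        refine Ideal.add_mem _ (Ideal.sum_mem _ fun j _ => Ideal.mul_mem_right _ _ ?_) hX
        have e : φ (t j) - φ (∏ k, s k) * cv j = -(φ (∏ k, s k) * cv j - φ (t j)) := by ring
        rw [e]
        exact neg_mem (he j)
      have hsum_p : (∑ j, t j ^ 2) ∈ p := by rw [← hqc]; exact hY
      have htp : t i ∈ p := hpreal n t hsum_p i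
      have hfin : φ (∏ k, s k) * cv i ∈ q := by
        have e : φ (∏ k, s k) * cv i = (φ (∏ k, s k) * cv i - φ (t i)) + φ (t i) := by ring
        rw [e]
        refine Ideal.add_mem _ (he i) ?_
        have : t i ∈ q.comap φ := hqc ▸ htp
        exact this
      rcases hq.mem_or_mem hfin with hmem | hmem
      · exact absurd (show (∏ k, s k) ∈ p by rw [← hqc]; exact hmem) hSc
      · exact hmem
    · -- residue field surjectivity
      intro b
      obtain ⟨a, s, hs, hdq⟩ := KC b
      exact ⟨a, s, hs, hdq q hq hqc⟩
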